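/- Let G be a long-refinement graph, p the minimal iteration with all classes of π^p of size at most 2, P_1 the first pair to split, and P_a, P_b (with 1 < a < b) the two pairs into which C_{p-1} splits in iteration p. Then there exists a vertex u ∈ P_1 such that u is adjacent to both vertices of P_a and to neither vertex of P_b, while the other vertex of P_1 is adjacent to both vertices of P_b and to neither vertex of P_a. -/

import Mathlib

variable {V : Type*}

/-- Colour Refinement equivalence: `crRel G i u v` means `u` and `v` get the same colour
after `i` iterations of Colour Refinement on `G` (starting monochromatic). -/
def crRel (G : SimpleGraph V) : ℕ → V → V → Prop
  | 0 => fun _ _ => True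
  | (i+1) => fun u v => crRel G i u v ∧ ∀ w : V,
      Nat.card {x : V // G.Adj u x ∧ crRel G i x w} =
      Nat.card {x : V // G.Adj v x ∧ crRel G i x w}

/-- The colour class of `v` after `i` iterations. -/
def crClass (G : SimpleGraph V) (i : ℕ) (v : V) : Set V :=
  {u : V | crRel G i u v}

/-- The partition `π^i` induced by the colouring after `i` iterations. -/
def crPartition (G : SimpleGraph V) (i : ℕ) : Set (Set V) :=
  {C : Set V | ∃ v : V, C = crClass G i v}

/-- `G` is a long-refinement graph: Colour Refinement takes exactly `n - 1` iterations
to stabilise. -/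
def IsLongRefinement [Fintype V] (G : SimpleGraph V) : Prop :=
  (∀ i < Fintype.card V - 1, crPartition G (i+1) ≠ crPartition G i) ∧
  crPartition G (Fintype.card V) = crPartition G (Fintype.card V - 1)

/-- The degree of a vertex. -/
noncomputable def vdeg (G : SimpleGraph V) (v : V) : ℕ :=
  Nat.card {u : V // G.Adj v u}

/-- `degOn G C C' k` : every vertex of `C` has exactly `k` neighbours in `C'`,
i.e. `deg_{C'}(C) = k`. -/
def degOn (G : SimpleGraph V) (C C' : Set V) (k : ℕ) : Prop :=
  ∀ v ∈ C, Nat.card {x : V // x ∈ C' ∧ G.Adj v x} = k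

/-- `C` is balanced with respect to `C'`: `deg_{C'}(C)` is defined. -/
def BalancedWrt (G : SimpleGraph V) (C C' : Set V) : Prop :=
  ∃ k, degOn G C C' k

section Aux

variable (G : SimpleGraph V)

theorem crRel_refl (i : ℕ) (v : V) : crRel G i v v := by
  induction i with
  | zero => trivial
  | succ i ih => exact ⟨ih, fun w => rfl⟩

theorem crRel_symm {i : ℕ} {u v : V} (h : crRel G i u v) : crRel G i v u := by
  induction i with
  | zero => trivial
  | succ i ih => exact ⟨ih h.1, fun w => (h.2 w).symm⟩

theorem crRel_trans {i : ℕ} {u v w : V} (h1 : crRel G i u v) (h2 : crRel G i v w) :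
    crRel G i u w := by
  induction i with
  | zero => trivial
  | succ i ih => exact ⟨ih h1.1 h2.1, fun x => (h1.2 x).trans (h2.2 x)⟩

theorem mem_crClass {i : ℕ} {u v : V} : u ∈ crClass G i v ↔ crRel G i u v := Iff.rfl

theorem self_mem_crClass (i : ℕ) (v : V) : v ∈ crClass G i v := crRel_refl G i v

theorem crClass_eq_of_rel {i : ℕ} {u v : V} (h : crRel G i u v) :
    crClass G i u = crClass G i v := by
  ext x
  exact ⟨fun hx => crRel_trans G hx h, fun hx => crRel_trans G hx (crRel_symm G h)⟩

theorem crClass_eq_of_mem {i : ℕ} {u v : V} (h : u ∈ crClass G i v) :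
    crClass G i u = crClass G i v := crClass_eq_of_rel G h

theorem class_eq_of_mem {i : ℕ} {D : Set V} (hD : D ∈ crPartition G i) {v : V} (hv : v ∈ D) :
    D = crClass G i v := by
  obtain ⟨w, rfl⟩ := hD
  exact (crClass_eq_of_mem G hv).symm

theorem crClass_mem_partition (i : ℕ) (v : V) : crClass G i v ∈ crPartition G i := ⟨v, rfl⟩

theorem partition_nonempty {i : ℕ} {D : Set V} (hD : D ∈ crPartition G i) : D.Nonempty := by
  obtain ⟨v, rfl⟩ := hD
  exact ⟨v, self_mem_crClass G i v⟩

theorem crClass_succ_subset (i : ℕ) (v : V) : crClass G (i+1) v ⊆ crClass G i v :=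
  fun _ hx => hx.1

theorem partition_disjoint {i : ℕ} {D E : Set V} (hD : D ∈ crPartition G i)
    (hE : E ∈ crPartition G i) (hne : D ≠ E) : ∀ x, x ∈ D → x ∉ E := by
  intro x hxD hxE
  exact hne ((class_eq_of_mem G hD hxD).trans (class_eq_of_mem G hE hxE).symm)

noncomputable def degIn (v : V) (S : Set V) : ℕ := {x | x ∈ S ∧ G.Adj v x}.ncard

theorem degIn_eq_natCard (v : V) (S : Set V) :
    degIn G v S = Nat.card {x : V // x ∈ S ∧ G.Adj v x} := (Nat.card_coe_set_eq _).symm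

theorem cnt_eq_degIn (i : ℕ) (v w : V) :
    Nat.card {x : V // G.Adj v x ∧ crRel G i x w} = degIn G v (crClass G i w) := by
  rw [degIn_eq_natCard]
  exact Nat.card_congr (Equiv.subtypeEquivRight fun x => and_comm)

theorem crRel_succ_iff {i : ℕ} {u v : V} : crRel G (i+1) u v ↔
    crRel G i u v ∧ ∀ w, degIn G u (crClass G i w) = degIn G v (crClass G i w) := by
  constructor
  · intro h
    exact ⟨h.1, fun w => by rw [← cnt_eq_degIn, ← cnt_eq_degIn]; exact h.2 w⟩
  · intro h
    exact ⟨h.1, fun w => by rw [cnt_eq_degIn, cnt_eq_degIn]; exact h.2 w⟩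

theorem degIn_eq_of_rel {i : ℕ} {u v : V} (h : crRel G (i+1) u v) {E : Set V}
    (hE : E ∈ crPartition G i) : degIn G u E = degIn G v E := by
  obtain ⟨w, rfl⟩ := hE
  exact ((crRel_succ_iff G).1 h).2 w

theorem crClass_eq_of_partition_eq {i j : ℕ} (h : crPartition G i = crPartition G j) (v : V) :
    crClass G i v = crClass G j v := by
  have h1 : crClass G i v ∈ crPartition G j := h ▸ crClass_mem_partition G i v
  exact class_eq_of_mem G h1 (self_mem_crClass G i v)

theorem crRel_iff_of_partition_eq {i j : ℕ} (h : crPartition G i = crPartition G j) (u v : V) :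
    crRel G i u v ↔ crRel G j u v := by
  rw [← mem_crClass, ← mem_crClass, crClass_eq_of_partition_eq G h]

theorem partition_eq_of_rel_iff {i j : ℕ} (h : ∀ u v, crRel G i u v ↔ crRel G j u v) :
    crPartition G i = crPartition G j := by
  have hc : ∀ v, crClass G i v = crClass G j v := by
    intro v; ext x; exact h x v
  ext D
  constructor
  · rintro ⟨v, rfl⟩; exact ⟨v, (hc v).symm ▸ rfl⟩
  · rintro ⟨v, rfl⟩; exact ⟨v, (hc v) ▸ rfl⟩

theorem rel_iff_succ {i j : ℕ} (h : ∀ u v, crRel G i u v ↔ crRel G j u v) :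
    ∀ u v, crRel G (i+1) u v ↔ crRel G (j+1) u v := by
  intro u v
  have hcnt : ∀ (a w : V), Nat.card {x : V // G.Adj a x ∧ crRel G i x w} =
      Nat.card {x : V // G.Adj a x ∧ crRel G j x w} := by
    intro a w
    exact Nat.card_congr (Equiv.subtypeEquivRight fun x => by rw [h x w])
  constructor
  · intro hr
    exact ⟨(h u v).1 hr.1, fun w => by rw [← hcnt u w, ← hcnt v w]; exact hr.2 w⟩
  · intro hr
    exact ⟨(h u v).2 hr.1, fun w => by rw [hcnt u w, hcnt v w]; exact hr.2 w⟩

theorem stab_rel {m : ℕ} (hstab : crPartition G (m+1) = crPartition G m) :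
    ∀ k, ∀ u v, crRel G (m+k) u v ↔ crRel G m u v := by
  intro k
  induction k with
  | zero => intro u v; rfl
  | succ k ih =>
      intro u v
      have h1 := rel_iff_succ G ih u v
      rw [show m + (k+1) = (m+k)+1 from rfl, h1]
      exact crRel_iff_of_partition_eq G hstab u v

theorem stab_partition {m : ℕ} (hstab : crPartition G (m+1) = crPartition G m)
    {j : ℕ} (hj : m ≤ j) : crPartition G j = crPartition G m := by
  obtain ⟨k, rfl⟩ := Nat.exists_eq_add_of_le hj
  exact partition_eq_of_rel_iff G (stab_rel G hstab k)

theorem partition_succ_eq_of_subset {i : ℕ}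
    (h : crPartition G (i+1) ⊆ crPartition G i) : crPartition G (i+1) = crPartition G i := by
  apply Set.Subset.antisymm h
  rintro D ⟨v, rfl⟩
  have h1 : crClass G (i+1) v ∈ crPartition G i := h (crClass_mem_partition G (i+1) v)
  have h2 : crClass G (i+1) v = crClass G i v :=
    class_eq_of_mem G h1 (self_mem_crClass G (i+1) v)
  exact h2 ▸ crClass_mem_partition G (i+1) v

end Aux

section Counting

variable (G : SimpleGraph V)

open scoped Classical in
noncomputable def pick [Nonempty V] (D : Set V) : V :=
  if h : D.Nonempty then h.some else Classical.arbitrary V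

theorem pick_mem [Nonempty V] {D : Set V} (h : D.Nonempty) : pick D ∈ D := by
  classical
  rw [pick, dif_pos h]
  exact h.some_mem

theorem ncard_le_of_surjOn {α β : Type*} {s : Set α} {t : Set β} (f : α → β)
    (h : Set.SurjOn f s t) (hs : s.Finite) : t.ncard ≤ s.ncard :=
  le_trans (Set.ncard_le_ncard h (hs.image f)) (Set.ncard_image_le hs)

variable [Fintype V]

theorem ncard_partition_le [Nonempty V] (i : ℕ) :
    (crPartition G i).ncard ≤ Fintype.card V := by
  have hinj : Set.InjOn (fun D => pick D) (crPartition G i) := by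
    intro D1 h1 D2 h2 hpick
    have m1 : pick D1 ∈ D1 := pick_mem (partition_nonempty G h1)
    have m2 : pick D2 ∈ D2 := pick_mem (partition_nonempty G h2)
    simp only at hpick
    rw [hpick] at m1
    exact (class_eq_of_mem G h1 m1).trans (class_eq_of_mem G h2 m2).symm
  have h := Set.ncard_le_ncard_of_injOn (s := crPartition G i) (t := (Set.univ : Set V))
    (fun D => pick D) (fun D _ => Set.mem_univ (pick D)) hinj Set.finite_univ
  rwa [Set.ncard_univ, Nat.card_eq_fintype_card] at h

theorem ncard_mono [Nonempty V] (i : ℕ) :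
    (crPartition G i).ncard ≤ (crPartition G (i+1)).ncard := by
  apply ncard_le_of_surjOn (fun D => crClass G i (pick D)) ?_ (Set.toFinite _)
  rintro E ⟨v, rfl⟩
  refine ⟨crClass G (i+1) v, crClass_mem_partition G (i+1) v, ?_⟩
  have hm : pick (crClass G (i+1) v) ∈ crClass G i v :=
    crClass_succ_subset G i v (pick_mem ⟨v, self_mem_crClass G (i+1) v⟩)
  exact crClass_eq_of_mem G hm

theorem ncard_strict [Nonempty V] {i : ℕ} (hne : crPartition G (i+1) ≠ crPartition G i) :
    (crPartition G i).ncard + 1 ≤ (crPartition G (i+1)).ncard := by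
  have hex : ∃ E ∈ crPartition G (i+1), E ∉ crPartition G i := by
    by_contra hcon
    push_neg at hcon
    exact hne (partition_succ_eq_of_subset G hcon)
  obtain ⟨E, hE, hE'⟩ := hex
  obtain ⟨v, rfl⟩ := hE
  have hEmem : crClass G (i+1) v ∈ crPartition G (i+1) := crClass_mem_partition G (i+1) v
  have hsub : crClass G (i+1) v ⊆ crClass G i v := crClass_succ_subset G i v
  have hssub : crClass G (i+1) v ≠ crClass G i v := fun h => hE' (h ▸ crClass_mem_partition G i v)
  obtain ⟨e2, he2, he2'⟩ := Set.exists_of_ssubset ⟨hsub, fun h => hssub (hsub.antisymm h)⟩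
  have hsurj : Set.SurjOn (fun D => crClass G i (pick D))
      (crPartition G (i+1) \ {crClass G (i+1) v}) (crPartition G i) := by
    rintro E0 ⟨v0, rfl⟩
    by_cases hcase : crClass G i v0 = crClass G i v
    · refine ⟨crClass G (i+1) e2, ⟨crClass_mem_partition G (i+1) e2, ?_⟩, ?_⟩
      · intro hmem
        simp only [Set.mem_singleton_iff] at hmem
        exact he2' (hmem ▸ self_mem_crClass G (i+1) e2)
      · have hp : pick (crClass G (i+1) e2) ∈ crClass G i e2 :=
          crClass_succ_subset G i e2 (pick_mem ⟨e2, self_mem_crClass G (i+1) e2⟩)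
        have he : crClass G i e2 = crClass G i v := crClass_eq_of_mem G he2
        show crClass G i (pick (crClass G (i+1) e2)) = crClass G i v0
        rw [crClass_eq_of_mem G hp, he, ← hcase]
    · refine ⟨crClass G (i+1) v0, ⟨crClass_mem_partition G (i+1) v0, ?_⟩, ?_⟩
      · intro hmem
        simp only [Set.mem_singleton_iff] at hmem
        have : v0 ∈ crClass G (i+1) v := hmem ▸ self_mem_crClass G (i+1) v0
        exact hcase (crClass_eq_of_mem G (hsub this))
      · have hp : pick (crClass G (i+1) v0) ∈ crClass G i v0 :=
          crClass_succ_subset G i v0 (pick_mem ⟨v0, self_mem_crClass G (i+1) v0⟩)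
        show crClass G i (pick (crClass G (i+1) v0)) = crClass G i v0
        exact crClass_eq_of_mem G hp
  have h1 : (crPartition G i).ncard ≤ (crPartition G (i+1) \ {crClass G (i+1) v}).ncard :=
    ncard_le_of_surjOn _ hsurj (Set.toFinite _)
  have h2 : (crPartition G (i+1) \ {crClass G (i+1) v}).ncard = (crPartition G (i+1)).ncard - 1 :=
    Set.ncard_diff_singleton_of_mem hEmem
  have h3 : 1 ≤ (crPartition G (i+1)).ncard :=
    (Set.ncard_pos (Set.toFinite _)).2 ⟨_, hEmem⟩
  omega

theorem ncard_chain [Nonempty V] (h : IsLongRefinement G) :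
    ∀ i j, i ≤ j → j ≤ Fintype.card V - 1 →
      (crPartition G i).ncard + (j - i) ≤ (crPartition G j).ncard := by
  intro i j hij
  induction j, hij using Nat.le_induction with
  | base => intro _; simp
  | succ j hij ih =>
      intro hj1
      have h1 := h.1 j (by omega)
      have h2 := ncard_strict G h1
      have h3 := ih (by omega)
      omega

omit [Fintype V] in
theorem ncard_partition_zero [Nonempty V] : (crPartition G 0).ncard = 1 := by
  have : crPartition G 0 = {Set.univ} := by
    ext D
    constructor
    · rintro ⟨v, rfl⟩
      simp only [Set.mem_singleton_iff]
      ext x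
      simp [mem_crClass, crRel]
    · rintro rfl
      refine ⟨Classical.arbitrary V, ?_⟩
      ext x
      simp [mem_crClass, crRel]
  rw [this, Set.ncard_singleton]

end Counting

section Degrees

open scoped Classical

variable (G : SimpleGraph V) [Fintype V]

theorem degIn_eq_sum (v : V) (T : Set V) :
    degIn G v T = ∑ w ∈ T.toFinite.toFinset, if G.Adj v w then 1 else 0 := by
  have hset : {x | x ∈ T ∧ G.Adj v x} =
      ↑(T.toFinite.toFinset.filter (fun w => G.Adj v w)) := by
    ext x
    simp [Set.Finite.mem_toFinset, Set.mem_setOf_eq]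
  rw [degIn, hset, Set.ncard_coe_finset, Finset.card_filter]

theorem handshake (S T : Set V) :
    ∑ v ∈ S.toFinite.toFinset, degIn G v T = ∑ w ∈ T.toFinite.toFinset, degIn G w S := by
  calc ∑ v ∈ S.toFinite.toFinset, degIn G v T      = ∑ v ∈ S.toFinite.toFinset, ∑ w ∈ T.toFinite.toFinset, if G.Adj v w then 1 else 0 :=
        Finset.sum_congr rfl fun v _ => degIn_eq_sum G v T
    _ = ∑ w ∈ T.toFinite.toFinset, ∑ v ∈ S.toFinite.toFinset, if G.Adj v w then 1 else 0 :=
        Finset.sum_comm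
    _ = ∑ w ∈ T.toFinite.toFinset, degIn G w S := by
        refine Finset.sum_congr rfl fun w _ => ?_
        rw [degIn_eq_sum]
        refine Finset.sum_congr rfl fun v _ => ?_
        rw [G.adj_comm]

theorem degIn_le_ncard (v : V) (S : Set V) : degIn G v S ≤ S.ncard :=
  Set.ncard_le_ncard (fun x hx => hx.1) (Set.toFinite _)

theorem degIn_union {v : V} {S T : Set V} (h : ∀ x, x ∈ S → x ∉ T) :
    degIn G v (S ∪ T) = degIn G v S + degIn G v T := by
  rw [degIn, degIn, degIn]
  have hset : {x | x ∈ S ∪ T ∧ G.Adj v x} = {x | x ∈ S ∧ G.Adj v x} ∪ {x | x ∈ T ∧ G.Adj v x} := by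
    ext x
    simp only [Set.mem_union, Set.mem_setOf_eq]
    tauto
  rw [hset, Set.ncard_union_eq ?_ (Set.toFinite _) (Set.toFinite _)]
  rw [Set.disjoint_left]
  intro x hx hx'
  exact h x hx.1 hx'.1

theorem adj_all_of_degIn_eq (v : V) {S : Set V} (h : degIn G v S = S.ncard) :
    ∀ x ∈ S, G.Adj v x := by
  have hsub : {x | x ∈ S ∧ G.Adj v x} ⊆ S := fun x hx => hx.1
  have heq : {x | x ∈ S ∧ G.Adj v x} = S :=
    Set.eq_of_subset_of_ncard_le hsub (le_of_eq h.symm) (Set.toFinite _)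
  intro x hx
  rw [← heq] at hx
  exact hx.2

theorem adj_none_of_degIn_eq_zero (v : V) {S : Set V} (h : degIn G v S = 0) :
    ∀ x ∈ S, ¬ G.Adj v x := by
  have heq : {x | x ∈ S ∧ G.Adj v x} = ∅ := (Set.ncard_eq_zero (Set.toFinite _)).1 h
  intro x hx hadj
  have : x ∈ ({x | x ∈ S ∧ G.Adj v x} : Set V) := ⟨hx, hadj⟩
  rw [heq] at this
  exact this

theorem pair_eq_of_ncard_le_two {S : Set V} (h2 : S.ncard ≤ 2) {a b : V}
    (ha : a ∈ S) (hb : b ∈ S) (hab : a ≠ b) : S = {a, b} := by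
  have hsub : ({a, b} : Set V) ⊆ S := by
    intro x hx
    rcases hx with rfl | rfl
    · exact ha
    · exact hb
  refine (Set.eq_of_subset_of_ncard_le hsub ?_ (Set.toFinite _)).symm
  rw [Set.ncard_pair hab]
  exact h2

end Degrees

section Structural

variable (G : SimpleGraph V) [Fintype V]

theorem degIn_pair {a b : V} (hab : a ≠ b) :
    degIn G a ({a, b} : Set V) = degIn G b ({a, b} : Set V) := by
  by_cases h : G.Adj a b
  · have h1 : {x | x ∈ ({a, b} : Set V) ∧ G.Adj a x} = {b} := by
      ext x
      simp only [Set.mem_insert_iff, Set.mem_singleton_iff, Set.mem_setOf_eq]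
      constructor
      · rintro ⟨rfl | rfl, hadj⟩
        · exact absurd hadj (G.irrefl)
        · rfl
      · rintro rfl
        exact ⟨Or.inr rfl, h⟩
    have h2 : {x | x ∈ ({a, b} : Set V) ∧ G.Adj b x} = {a} := by
      ext x
      simp only [Set.mem_insert_iff, Set.mem_singleton_iff, Set.mem_setOf_eq]
      constructor
      · rintro ⟨rfl | rfl, hadj⟩
        · rfl
        · exact absurd hadj (G.irrefl)
      · rintro rfl
        exact ⟨Or.inl rfl, h.symm⟩
    rw [degIn, degIn, h1, h2, Set.ncard_singleton, Set.ncard_singleton]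
  · have h1 : {x | x ∈ ({a, b} : Set V) ∧ G.Adj a x} = ∅ := by
      ext x
      simp only [Set.mem_insert_iff, Set.mem_singleton_iff, Set.mem_setOf_eq,
        Set.mem_empty_iff_false, iff_false, not_and]
      rintro (rfl | rfl)
      · exact G.irrefl
      · exact h
    have h2 : {x | x ∈ ({a, b} : Set V) ∧ G.Adj b x} = ∅ := by
      ext x
      simp only [Set.mem_insert_iff, Set.mem_singleton_iff, Set.mem_setOf_eq,
        Set.mem_empty_iff_false, iff_false, not_and]
      rintro (rfl | rfl)
      · exact fun hadj => h hadj.symm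
      · exact G.irrefl
    rw [degIn, degIn, h1, h2]

theorem unique_split {q : ℕ} {C A B : Set V}
    (hC : C ∈ crPartition G q)
    (hA : A ∈ crPartition G (q+1)) (hB : B ∈ crPartition G (q+1))
    (hAB : A ≠ B) (hCAB : C = A ∪ B)
    (hcard : (crPartition G (q+1)).ncard ≤ (crPartition G q).ncard + 1) :
    ∀ E ∈ crPartition G (q+1), E ≠ A → E ≠ B → E ∈ crPartition G q := by
  have hV : Nonempty V := ⟨(partition_nonempty G hC).choose⟩
  intro E hE hEA hEB
  by_contra hE'
  obtain ⟨e, rfl⟩ := hE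
  have hsubE : crClass G (q+1) e ⊆ crClass G q e := crClass_succ_subset G q e
  have hE'C : crClass G q e ≠ C := by
    intro heq
    have : e ∈ C := heq ▸ self_mem_crClass G q e
    rw [hCAB] at this
    rcases this with hmem | hmem
    · exact hEA (class_eq_of_mem G hA hmem).symm
    · exact hEB (class_eq_of_mem G hB hmem).symm
  have hssub : crClass G (q+1) e ≠ crClass G q e :=
    fun h => hE' (h ▸ crClass_mem_partition G q e)
  obtain ⟨e2, he2, he2'⟩ :=
    Set.exists_of_ssubset ⟨hsubE, fun h => hssub (hsubE.antisymm h)⟩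
  have hsurj : Set.SurjOn (fun D => crClass G q (pick D))
      (crPartition G (q+1) \ {A, crClass G (q+1) e}) (crPartition G q) := by
    rintro E0 ⟨v0, rfl⟩
    by_cases hc1 : crClass G q v0 = C
    · refine ⟨B, ⟨hB, ?_⟩, ?_⟩
      · intro hmem
        rcases hmem with rfl | hmem
        · exact hAB rfl
        · simp only [Set.mem_singleton_iff] at hmem
          exact hEB hmem.symm
      · have hpb : pick B ∈ B := pick_mem (partition_nonempty G hB)
        have hpbC : pick B ∈ C := hCAB ▸ Or.inr hpb
        show crClass G q (pick B) = crClass G q v0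
        rw [← class_eq_of_mem G hC hpbC, hc1]
    · by_cases hc2 : crClass G q v0 = crClass G q e
      · refine ⟨crClass G (q+1) e2, ⟨crClass_mem_partition G (q+1) e2, ?_⟩, ?_⟩
        · intro hmem
          rcases hmem with heq | heq
          · -- crClass (q+1) e2 = A, but then e2 ∈ A ⊆ C, contradicting crClass q e2 = crClass q e ≠ C
            have he2A : e2 ∈ A := heq ▸ self_mem_crClass G (q+1) e2
            have he2C : e2 ∈ C := hCAB ▸ Or.inl he2A
            have h1 : crClass G q e2 = C := (class_eq_of_mem G hC he2C).symm
            have h2 : crClass G q e2 = crClass G q e := crClass_eq_of_mem G he2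
            exact hE'C (h2 ▸ h1)
          · simp only [Set.mem_singleton_iff] at heq
            exact he2' (heq ▸ self_mem_crClass G (q+1) e2)
        · have hp : pick (crClass G (q+1) e2) ∈ crClass G q e2 :=
            crClass_succ_subset G q e2 (pick_mem ⟨e2, self_mem_crClass G (q+1) e2⟩)
          show crClass G q (pick (crClass G (q+1) e2)) = crClass G q v0
          rw [crClass_eq_of_mem G hp, crClass_eq_of_mem G he2, ← hc2]
      · refine ⟨crClass G (q+1) v0, ⟨crClass_mem_partition G (q+1) v0, ?_⟩, ?_⟩
        · intro hmem
          rcases hmem with heq | heq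
          · have hv0A : v0 ∈ A := heq ▸ self_mem_crClass G (q+1) v0
            have hv0C : v0 ∈ C := hCAB ▸ Or.inl hv0A
            exact hc1 (class_eq_of_mem G hC hv0C).symm
          · simp only [Set.mem_singleton_iff] at heq
            have : v0 ∈ crClass G (q+1) e := heq ▸ self_mem_crClass G (q+1) v0
            exact hc2 (crClass_eq_of_mem G (hsubE this))
        · have hp : pick (crClass G (q+1) v0) ∈ crClass G q v0 :=
            crClass_succ_subset G q v0 (pick_mem ⟨v0, self_mem_crClass G (q+1) v0⟩)
          show crClass G q (pick (crClass G (q+1) v0)) = crClass G q v0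
          exact crClass_eq_of_mem G hp
  have hpairsub : ({A, crClass G (q+1) e} : Set (Set V)) ⊆ crPartition G (q+1) := by
    intro D hD
    rcases hD with rfl | hD
    · exact hA
    · simp only [Set.mem_singleton_iff] at hD
      exact hD ▸ crClass_mem_partition G (q+1) e
  have hAne : A ≠ crClass G (q+1) e := fun h => hEA h.symm
  have h1 : (crPartition G q).ncard ≤ (crPartition G (q+1) \ {A, crClass G (q+1) e}).ncard :=
    ncard_le_of_surjOn _ hsurj (Set.toFinite _)
  have h2 : (crPartition G (q+1) \ {A, crClass G (q+1) e}).ncard =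
      (crPartition G (q+1)).ncard - 2 := by
    rw [Set.ncard_diff hpairsub (Set.toFinite _), Set.ncard_pair hAne]
  have h3 : 2 ≤ (crPartition G (q+1)).ncard := by
    have := Set.ncard_le_ncard hpairsub (Set.toFinite _)
    rwa [Set.ncard_pair hAne] at this
  omega

theorem pair_stable {q : ℕ} {C A B : Set V}
    (hC : C ∈ crPartition G q)
    (hA : A ∈ crPartition G (q+1)) (hB : B ∈ crPartition G (q+1))
    (hAB : A ≠ B) (hCAB : C = A ∪ B) (hA2 : A.ncard ≤ 2)
    (hold : ∀ E ∈ crPartition G (q+1), E ≠ A → E ≠ B → E ∈ crPartition G q) :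
    A ∈ crPartition G (q+2) := by
  obtain ⟨a0, rfl⟩ := hA
  refine ⟨a0, ?_⟩
  apply Set.Subset.antisymm ?_ (crClass_succ_subset G (q+1) a0)
  intro a ha
  by_cases haa : a = a0
  · subst haa
    exact self_mem_crClass G (q+2) a
  -- key degree facts
  have hApart : crClass G (q+1) a0 ∈ crPartition G (q+1) := crClass_mem_partition G (q+1) a0
  have hApair : crClass G (q+1) a0 = {a, a0} :=
    pair_eq_of_ncard_le_two hA2 ha (self_mem_crClass G (q+1) a0) haa
  have hAdeg : degIn G a (crClass G (q+1) a0) = degIn G a0 (crClass G (q+1) a0) := by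
    rw [hApair]
    exact degIn_pair G haa
  have hCdeg : degIn G a C = degIn G a0 C := degIn_eq_of_rel G ha hC
  have hdisjAB : ∀ x, x ∈ crClass G (q+1) a0 → x ∉ B := partition_disjoint G hApart hB hAB
  have hadd : ∀ v : V, degIn G v C = degIn G v (crClass G (q+1) a0) + degIn G v B := by
    intro v
    rw [hCAB]
    exact degIn_union G hdisjAB
  have hBdeg : degIn G a B = degIn G a0 B := by
    have h1 := hadd a
    have h2 := hadd a0
    omega
  show crRel G (q+1+1) a a0
  rw [crRel_succ_iff]
  refine ⟨ha, fun w => ?_⟩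
  by_cases hEA : crClass G (q+1) w = crClass G (q+1) a0
  · rw [hEA]
    exact hAdeg
  by_cases hEB : crClass G (q+1) w = B
  · rw [hEB]
    exact hBdeg
  · exact degIn_eq_of_rel G ha (hold _ (crClass_mem_partition G (q+1) w) hEA hEB)

end Structural


section MainArith

theorem split_pattern {na x y α : ℕ} (hna : na = 1 ∨ na = 2) (hx : x ≤ na) (hy : y ≤ na)
    (hxy : x ≠ y) (hsum : na * α = x + y) (hα : α ≤ 2) :
    (x = na ∧ y = 0) ∨ (x = 0 ∧ y = na) := by
  rcases hna with rfl | rfl <;> omega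

end MainArith

/-- The first pair `P₁` to split is joined to the two pairs `A = P_a` and
`B = P_b` resulting from the split of `C_{p-1}` as follows: one vertex `u` of
`P₁` is complete to `A` and non-adjacent to `B`, while the other vertex of `P₁`
is complete to `B` and non-adjacent to `A`. -/
theorem first_pair_attachment [Fintype V] (G : SimpleGraph V)
    (h : IsLongRefinement G) (p : ℕ) (hp1 : 1 ≤ p)
    (hp : ∀ C ∈ crPartition G p, C.ncard ≤ 2)
    (hpmin : ∀ q < p, ∃ C ∈ crPartition G q, 2 < C.ncard)
    (C A B : Set V)
    (hC : C ∈ crPartition G (p-1)) (hC' : C ∉ crPartition G p)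
    (hA : A ∈ crPartition G p) (hA' : A ∉ crPartition G (p-1))
    (hB : B ∈ crPartition G p) (hB' : B ∉ crPartition G (p-1))
    (hAB : A ≠ B) (hCAB : C = A ∪ B)
    (P1 : Set V) (hP1 : P1 ∈ crPartition G p) (hP1' : P1 ∉ crPartition G (p+1)) :
    ∃ u ∈ P1, (∀ x ∈ A, G.Adj u x) ∧ (∀ x ∈ B, ¬ G.Adj u x) ∧
      ∀ y ∈ P1, y ≠ u → (∀ x ∈ B, G.Adj y x) ∧ (∀ x ∈ A, ¬ G.Adj y x) := by
  classical
  obtain ⟨q, rfl⟩ : ∃ q, p = q + 1 := ⟨p - 1, (Nat.succ_pred_eq_of_pos hp1).symm⟩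
  simp only [Nat.add_sub_cancel] at hC hC' hA' hB'
  have hV : Nonempty V := ⟨(partition_nonempty G hC).choose⟩
  have hn1 : 1 ≤ Fintype.card V := Fintype.card_pos
  have hstab : ∀ j, Fintype.card V - 1 ≤ j →
      crPartition G j = crPartition G (Fintype.card V - 1) := by
    intro j hj
    have h2 : crPartition G ((Fintype.card V - 1) + 1) = crPartition G (Fintype.card V - 1) := by
      have he : (Fintype.card V - 1) + 1 = Fintype.card V := by omega
      rw [he]
      exact h.2
    exact stab_partition G h2 hj
  have hqn : q + 1 ≤ Fintype.card V - 1 := by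
    by_contra hcon
    push_neg at hcon
    have e1 := hstab q (by omega)
    have e2 := hstab (q+1) (by omega)
    rw [← e1] at e2
    exact hC' (e2 ▸ hC)
  have hchain1 := ncard_chain G h 0 q (by omega) (by omega)
  have hchain2 := ncard_chain G h (q+1) (Fintype.card V - 1) (by omega) (le_refl _)
  have hle := ncard_partition_le G (Fintype.card V - 1)
  rw [ncard_partition_zero G] at hchain1
  have hcard : (crPartition G (q+1)).ncard ≤ (crPartition G q).ncard + 1 := by omega
  have hold := unique_split G hC hA hB hAB hCAB hcard
  have hAstab : A ∈ crPartition G (q+2) :=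
    pair_stable G hC hA hB hAB hCAB (hp A hA) hold
  have hBstab : B ∈ crPartition G (q+2) := by
    have hCBA : C = B ∪ A := by rw [hCAB, Set.union_comm]
    exact pair_stable G hC hB hA hAB.symm hCBA (hp B hB)
      (fun E hE h1 h2 => hold E hE h2 h1)
  have hP1A : P1 ≠ A := by
    intro hh
    exact hP1' (by rw [hh]; exact hAstab)
  have hP1B : P1 ≠ B := by
    intro hh
    exact hP1' (by rw [hh]; exact hBstab)
  have hP1old : P1 ∈ crPartition G q := hold P1 hP1 hP1A hP1B
  have hP1ne : P1.Nonempty := partition_nonempty G hP1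
  have hP1card : P1.ncard = 2 := by
    have hle2 := hp P1 hP1
    have hpos : 0 < P1.ncard := (Set.ncard_pos (Set.toFinite _)).2 hP1ne
    rcases Nat.lt_or_ge P1.ncard 2 with hlt | hge
    · exfalso
      have h1 : P1.ncard = 1 := by omega
      obtain ⟨v, rfl⟩ := Set.ncard_eq_one.1 h1
      apply hP1'
      have hcls : ({v} : Set V) = crClass G (q+1) v := class_eq_of_mem G hP1 rfl
      have hsub2 := crClass_succ_subset G (q+1) v
      rw [← hcls] at hsub2
      have heq : crClass G (q+1+1) v = {v} :=
        hsub2.antisymm (Set.singleton_subset_iff.2 (self_mem_crClass G (q+1+1) v))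
      exact ⟨v, heq.symm⟩
    · omega
  obtain ⟨u, y, huy, hP1pair⟩ := Set.ncard_eq_two.1 hP1card
  have hu : u ∈ P1 := by rw [hP1pair]; exact Or.inl rfl
  have hy : y ∈ P1 := by rw [hP1pair]; exact Or.inr rfl
  have hclsu : P1 = crClass G (q+1) u := class_eq_of_mem G hP1 hu
  have hrel : crRel G (q+1) u y := by
    have hyu : y ∈ crClass G (q+1) u := hclsu ▸ hy
    exact crRel_symm G hyu
  have hnrel : ¬ crRel G (q+1+1) u y := by
    intro hcon
    apply hP1'
    refine ⟨u, Set.Subset.antisymm ?_ ?_⟩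
    · rw [hP1pair]
      intro x hx
      rcases hx with rfl | hx
      · exact self_mem_crClass G (q+1+1) x
      · simp only [Set.mem_singleton_iff] at hx
        subst hx
        exact crRel_symm G hcon
    · intro x hx
      have : x ∈ crClass G (q+1) u := crClass_succ_subset G (q+1) u hx
      rw [← hclsu] at this
      exact this
  have hex : degIn G u A ≠ degIn G y A ∨ degIn G u B ≠ degIn G y B := by
    by_contra hcon
    push_neg at hcon
    apply hnrel
    rw [crRel_succ_iff]
    refine ⟨hrel, fun w => ?_⟩
    by_cases hEA : crClass G (q+1) w = A
    · rw [hEA]; exact hcon.1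
    by_cases hEB : crClass G (q+1) w = B
    · rw [hEB]; exact hcon.2
    exact degIn_eq_of_rel G hrel (hold _ (crClass_mem_partition G (q+1) w) hEA hEB)
  have hdisjAB : ∀ x, x ∈ A → x ∉ B := partition_disjoint G hA hB hAB
  have haddC : ∀ v : V, degIn G v C = degIn G v A + degIn G v B := by
    intro v
    rw [hCAB]
    exact degIn_union G hdisjAB
  have hCdeg : degIn G u C = degIn G y C := degIn_eq_of_rel G hrel hC
  have haC1 := haddC u
  have haC2 := haddC y
  have hbA : degIn G u A ≠ degIn G y A := by
    rcases hex with hne | hne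
    · exact hne
    · intro hEq; apply hne; omega
  have hbB : degIn G u B ≠ degIn G y B := by
    rcases hex with hne | hne
    · intro hEq; apply hne; omega
    · exact hne
  -- double counting for A
  have hsum : ∀ D : Set V, D ∈ crPartition G (q+1) →
      D.ncard * degIn G (pick D) P1 = degIn G u D + degIn G y D := by
    intro D hD
    have hDne : D.Nonempty := partition_nonempty G hD
    have hconst : ∀ v ∈ D.toFinite.toFinset, degIn G v P1 = degIn G (pick D) P1 := by
      intro v hv
      rw [Set.Finite.mem_toFinset] at hv
      have hD0 : D = crClass G (q+1) (pick D) := class_eq_of_mem G hD (pick_mem hDne)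
      have hvrel : crRel G (q+1) v (pick D) := by rw [hD0] at hv; exact hv
      exact degIn_eq_of_rel G hvrel hP1old
    have hlhs : ∑ v ∈ D.toFinite.toFinset, degIn G v P1 = D.ncard * degIn G (pick D) P1 := by
      rw [Finset.sum_congr rfl hconst, Finset.sum_const, smul_eq_mul,
        ← Set.ncard_eq_toFinset_card D D.toFinite]
    have hrhs : P1.toFinite.toFinset = ({u, y} : Finset V) := by
      ext x
      rw [Set.Finite.mem_toFinset, hP1pair]
      simp only [Set.mem_insert_iff, Set.mem_singleton_iff, Finset.mem_insert,
        Finset.mem_singleton]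
    have hhs := handshake G D P1
    rw [hlhs, hrhs, Finset.sum_pair huy] at hhs
    exact hhs
  have hsumA := hsum A hA
  have hsumB := hsum B hB
  have hαA : degIn G (pick A) P1 ≤ 2 := by
    have := degIn_le_ncard G (pick A) P1
    omega
  have hαB : degIn G (pick B) P1 ≤ 2 := by
    have := degIn_le_ncard G (pick B) P1
    omega
  have hAn : A.ncard = 1 ∨ A.ncard = 2 := by
    have h1 : 0 < A.ncard := (Set.ncard_pos (Set.toFinite _)).2 (partition_nonempty G hA)
    have h2 := hp A hA
    omega
  have hBn : B.ncard = 1 ∨ B.ncard = 2 := by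
    have h1 : 0 < B.ncard := (Set.ncard_pos (Set.toFinite _)).2 (partition_nonempty G hB)
    have h2 := hp B hB
    omega
  have patA := split_pattern hAn (degIn_le_ncard G u A) (degIn_le_ncard G y A) hbA
    hsumA hαA
  have patB := split_pattern hBn (degIn_le_ncard G u B) (degIn_le_ncard G y B) hbB
    hsumB hαB
  have hA1 : 1 ≤ A.ncard := by omega
  have hB1 : 1 ≤ B.ncard := by omega
  have hmemy : ∀ y' ∈ P1, y' = u ∨ y' = y := by
    intro y' hy'
    rw [hP1pair] at hy'
    rcases hy' with rfl | hy'
    · exact Or.inl rfl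
    · simp only [Set.mem_singleton_iff] at hy'
      exact Or.inr hy'
  rcases patA with ⟨e1, e2⟩ | ⟨e1, e2⟩
  · -- u complete to A
    have hf : degIn G u B = 0 ∧ degIn G y B = B.ncard := by
      rcases patB with ⟨f1, f2⟩ | ⟨f1, f2⟩
      · exfalso; omega
      · exact ⟨f1, f2⟩
    refine ⟨u, hu, adj_all_of_degIn_eq G u e1, adj_none_of_degIn_eq_zero G u hf.1, ?_⟩
    intro y' hy' hne
    rcases hmemy y' hy' with rfl | rfl
    · exact absurd rfl hne
    · exact ⟨adj_all_of_degIn_eq G y' hf.2, adj_none_of_degIn_eq_zero G y' e2⟩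
  · -- y complete to A
    have hf : degIn G u B = B.ncard ∧ degIn G y B = 0 := by
      rcases patB with ⟨f1, f2⟩ | ⟨f1, f2⟩
      · exact ⟨f1, f2⟩
      · exfalso; omega
    refine ⟨y, hy, adj_all_of_degIn_eq G y e2, adj_none_of_degIn_eq_zero G y hf.2, ?_⟩
    intro y' hy' hne
    rcases hmemy y' hy' with rfl | rfl
    · exact ⟨adj_all_of_degIn_eq G y' hf.1, adj_none_of_degIn_eq_zero G y' e1⟩
    · exact absurd rfl hne
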